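/- (Unconditional stability of RK2 preconditioned by second-order TASE at α = 3/2.) For every complex z with Re z ≤ 0, setting w = z * (-(1 - (3/2)*z)⁻¹ + 4*(2 - (3/2)*z)⁻¹), the stability function of the second-order Runge-Kutta method satisfies |1 + w + w²/2| ≤ 1. -/

import Mathlib

/-- Unconditional stability of the second-order Runge–Kutta method preconditioned by
the second-order TASE operator at `α = 3/2`: for every `z` in the closed left
half-plane, with `w = z T²(3/2, z)`, the RK2 stability function satisfies
`|1 + w + w²/2| ≤ 1`. -/
theorem rk2_tase2_unconditionally_stable (z : ℂ) (hz : z.re ≤ 0) :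
    ‖(1 + z * (-(1 - (3 / 2) * z)⁻¹ + 4 * (2 - (3 / 2) * z)⁻¹)
          + (z * (-(1 - (3 / 2) * z)⁻¹ + 4 * (2 - (3 / 2) * z)⁻¹)) ^ 2 / 2)‖ ≤ 1 := by
  have hd1 : (1 - (3/2:ℂ)*z) ≠ 0 := by
    intro h
    have h2 := congrArg Complex.re h
    simp [Complex.mul_re, Complex.div_re, Complex.normSq_apply] at h2
    norm_num at h2
    nlinarith [h2]
  have hd2 : (2 - (3/2:ℂ)*z) ≠ 0 := by
    intro h
    have h2 := congrArg Complex.re h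
    simp [Complex.mul_re, Complex.div_re, Complex.normSq_apply] at h2
    norm_num at h2
    nlinarith [h2]
  set P : ℂ := 8 - 28*z + (53/2)*z^2 - 9*z^3 + (81/8)*z^4 with hP
  set Q : ℂ := 8 - 36*z + (117/2)*z^2 - (81/2)*z^3 + (81/8)*z^4 with hQ
  have hQeq : Q = 2 * ((1 - (3/2:ℂ)*z) * (2 - (3/2:ℂ)*z))^2 := by rw [hQ]; ring
  have hQ0 : Q ≠ 0 := by
    rw [hQeq]
    exact mul_ne_zero two_ne_zero (pow_ne_zero _ (mul_ne_zero hd1 hd2))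
  have h1 : (1 - (3/2:ℂ)*z) * (1 - (3/2:ℂ)*z)⁻¹ = 1 := mul_inv_cancel₀ hd1
  have h2 : (2 - (3/2:ℂ)*z) * (2 - (3/2:ℂ)*z)⁻¹ = 1 := mul_inv_cancel₀ hd2
  have h11 : ((1 - (3/2:ℂ)*z) * (1 - (3/2:ℂ)*z)⁻¹) * ((1 - (3/2:ℂ)*z) * (1 - (3/2:ℂ)*z)⁻¹) = 1 := by
    rw [h1]; ring
  have h12 : ((1 - (3/2:ℂ)*z) * (1 - (3/2:ℂ)*z)⁻¹) * ((2 - (3/2:ℂ)*z) * (2 - (3/2:ℂ)*z)⁻¹) = 1 := by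
    rw [h1, h2]; ring
  have h22 : ((2 - (3/2:ℂ)*z) * (2 - (3/2:ℂ)*z)⁻¹) * ((2 - (3/2:ℂ)*z) * (2 - (3/2:ℂ)*z)⁻¹) = 1 := by
    rw [h2]; ring
  have hE : (1 + z * (-(1 - (3 / 2) * z)⁻¹ + 4 * (2 - (3 / 2) * z)⁻¹)
          + (z * (-(1 - (3 / 2) * z)⁻¹ + 4 * (2 - (3 / 2) * z)⁻¹)) ^ 2 / 2) = P / Q := by
    rw [eq_div_iff hQ0, hP, hQ]
    linear_combination (-2*z*(1 - (3/2:ℂ)*z)*(2 - (3/2:ℂ)*z)^2) * h1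
      + (8*z*(1 - (3/2:ℂ)*z)^2*(2 - (3/2:ℂ)*z)) * h2
      + (z^2*(2 - (3/2:ℂ)*z)^2) * h11
      + (-8*z^2*(1 - (3/2:ℂ)*z)*(2 - (3/2:ℂ)*z)) * h12
      + (16*z^2*(1 - (3/2:ℂ)*z)^2) * h22
  rw [hE, Complex.norm_div, div_le_one (norm_pos_iff.mpr hQ0)]
  rw [Complex.norm_def, Complex.norm_def]
  apply Real.sqrt_le_sqrt
  have hnx : (0:ℝ) ≤ -z.re := by linarith
  have hy2 : (0:ℝ) ≤ z.im^2 := sq_nonneg _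
  simp only [hP, hQ, pow_succ, pow_zero, one_mul, Complex.normSq_apply, Complex.add_re,
    Complex.add_im, Complex.sub_re, Complex.sub_im, Complex.mul_re, Complex.mul_im,
    Complex.re_ofNat, Complex.im_ofNat, Complex.div_re, Complex.div_im, Complex.one_re,
    Complex.one_im]
  norm_num
  nlinarith [mul_nonneg (pow_nonneg hnx 1) (pow_nonneg hy2 1),
    mul_nonneg (pow_nonneg hnx 1) (pow_nonneg hy2 2),
    mul_nonneg (pow_nonneg hnx 1) (pow_nonneg hy2 3),
    mul_nonneg (pow_nonneg hnx 2) (pow_nonneg hy2 1),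
    mul_nonneg (pow_nonneg hnx 2) (pow_nonneg hy2 2),
    mul_nonneg (pow_nonneg hnx 3) (pow_nonneg hy2 1),
    mul_nonneg (pow_nonneg hnx 3) (pow_nonneg hy2 2),
    mul_nonneg (pow_nonneg hnx 4) (pow_nonneg hy2 1),
    mul_nonneg (pow_nonneg hnx 5) (pow_nonneg hy2 1),
    pow_nonneg hnx 1, pow_nonneg hnx 2, pow_nonneg hnx 3, pow_nonneg hnx 4,
    pow_nonneg hnx 5, pow_nonneg hnx 6, pow_nonneg hnx 7,
    pow_nonneg hy2 2, pow_nonneg hy2 3]
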